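/- arXiv:1007.4191 — 3 statements merged into one kernel-verified Lean document; each statement's English description precedes it below -/
import Mathlib

section
/- Let x ∈ ℝⁿ, let t ≥ 2 be a real number, and let z be a uniformly random vector in {-1,1}ⁿ with independent coordinates. Then E[|⟨x,z⟩|^t] ≤ ‖x‖₂^t · t^{t/2}. -/
open scoped BigOperators

private lemma khintchine_aux1 {u lam t : ℝ} (hu : 0 ≤ u) (hl : 0 < lam) (ht : 0 < t) :
    u ^ t ≤ (t / lam) ^ t * Real.exp (lam * u - t) := by
  rcases eq_or_lt_of_le hu with h | h
  · rw [← h, Real.zero_rpow ht.ne']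
    positivity
  · have h1 : Real.log (lam * u / t) ≤ lam * u / t - 1 :=
      Real.log_le_sub_one_of_pos (by positivity)
    have h4 : t * Real.log (lam * u / t) ≤ lam * u - t := by
      calc t * Real.log (lam * u / t) ≤ t * (lam * u / t - 1) :=
            mul_le_mul_of_nonneg_left h1 ht.le
        _ = lam * u - t := by field_simp
    rw [Real.log_div (by positivity) ht.ne', Real.log_mul hl.ne' h.ne'] at h4
    rw [Real.rpow_def_of_pos h, Real.rpow_def_of_pos (by positivity), ← Real.exp_add,
      Real.exp_le_exp, Real.log_div ht.ne' hl.ne']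
    nlinarith

set_option maxHeartbeats 1000000 in
private lemma khintchine_aux2 (n : ℕ) (y : Fin n → ℝ) :
    ∑ z : Fin n → Bool, Real.exp (∑ i, y i * (if z i then (1:ℝ) else -1))
      = ∏ i, (Real.exp (y i) + Real.exp (-y i)) := by
  simp_rw [Real.exp_sum]
  calc ∑ z : Fin n → Bool, ∏ i, Real.exp (y i * (if z i then (1:ℝ) else -1))
      = ∏ i, ∑ b : Bool, Real.exp (y i * (if b then (1:ℝ) else -1)) :=
        (Fintype.prod_sum (fun (i : Fin n) (b : Bool) => Real.exp (y i * (if b then (1:ℝ) else -1)))).symm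
    _ = ∏ i, (Real.exp (y i) + Real.exp (-y i)) := by
        refine Finset.prod_congr rfl fun i _ => ?_
        simp

/-- Khintchine inequality: for `x ∈ ℝⁿ`, real `t ≥ 2`, and a uniformly random sign
vector `z ∈ {-1,1}ⁿ` (independent uniform coordinates, formalized as averaging over
all `2^n` sign patterns), `E[|⟨x,z⟩|^t] ≤ ‖x‖₂^t · t^(t/2)`. -/
theorem khintchine (n : ℕ) (x : Fin n → ℝ) (t : ℝ) (ht : 2 ≤ t) :
    (∑ z : Fin n → Bool, |∑ i, x i * (if z i then (1:ℝ) else -1)| ^ t) / 2 ^ n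
      ≤ (Real.sqrt (∑ i, (x i) ^ 2)) ^ t * t ^ (t / 2) := by
  have ht0 : (0:ℝ) < t := by linarith
  set s := ∑ i, (x i) ^ 2 with hs
  have hs0 : 0 ≤ s := Finset.sum_nonneg fun i _ => sq_nonneg _
  by_cases hz : s = 0
  · have hx : ∀ i, x i = 0 := by
      intro i
      have := (Finset.sum_eq_zero_iff_of_nonneg (fun i _ => sq_nonneg (x i))).1 hz i
        (Finset.mem_univ i)
      exact pow_eq_zero_iff (two_ne_zero) |>.1 this
    simp only [hx, zero_mul, Finset.sum_const_zero, abs_zero, hz, Real.sqrt_zero,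
      Real.zero_rpow ht0.ne']
    simp
  · have hspos : 0 < s := lt_of_le_of_ne hs0 (Ne.symm hz)
    set σ := Real.sqrt s with hσdef
    have hσ : 0 < σ := Real.sqrt_pos.2 hspos
    set lam := Real.sqrt t / σ with hlamdef
    have hlam : 0 < lam := div_pos (Real.sqrt_pos.2 ht0) hσ
    set S := fun z : Fin n → Bool => ∑ i, x i * (if z i then (1:ℝ) else -1) with hS
    have hst : Real.sqrt t * Real.sqrt t = t := Real.mul_self_sqrt ht0.le
    have hσσ : σ * σ = s := Real.mul_self_sqrt hs0
    -- pointwise bound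
    have key : ∀ z : Fin n → Bool, |S z| ^ t ≤ (t / lam) ^ t * Real.exp (-t) *
        (Real.exp (lam * S z) + Real.exp (-(lam * S z))) := by
      intro z
      have h1 := khintchine_aux1 (abs_nonneg (S z)) hlam ht0
      have h2 : Real.exp (lam * |S z|) ≤ Real.exp (lam * S z) + Real.exp (-(lam * S z)) := by
        rcases abs_cases (S z) with ⟨h, _⟩ | ⟨h, _⟩
        · rw [h]
          exact le_add_of_nonneg_right (Real.exp_pos _).le
        · rw [h, mul_neg]
          exact le_add_of_nonneg_left (Real.exp_pos _).le
      calc |S z| ^ t ≤ (t / lam) ^ t * Real.exp (lam * |S z| - t) := h1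
        _ = (t / lam) ^ t * Real.exp (-t) * Real.exp (lam * |S z|) := by
            rw [show lam * |S z| - t = -t + lam * |S z| by ring, Real.exp_add, ← mul_assoc]
        _ ≤ (t / lam) ^ t * Real.exp (-t) *
            (Real.exp (lam * S z) + Real.exp (-(lam * S z))) := by
            have : (0:ℝ) ≤ (t / lam) ^ t * Real.exp (-t) := by positivity
            exact mul_le_mul_of_nonneg_left h2 this
    -- product bound
    have hprod : ∏ i, (Real.exp (lam * x i) + Real.exp (-(lam * x i)))
        ≤ 2 ^ n * Real.exp (t / 2) := by
      have step : ∀ i ∈ Finset.univ, Real.exp (lam * x i) + Real.exp (-(lam * x i))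
          ≤ 2 * Real.exp ((lam * x i) ^ 2 / 2) := by
        intro i _
        have h := Real.cosh_le_exp_half_sq (lam * x i)
        rw [Real.cosh_eq] at h
        linarith
      calc ∏ i, (Real.exp (lam * x i) + Real.exp (-(lam * x i)))
          ≤ ∏ i, (2 * Real.exp ((lam * x i) ^ 2 / 2)) :=
            Finset.prod_le_prod (fun i _ => by positivity) step
        _ = 2 ^ n * Real.exp (∑ i, (lam * x i) ^ 2 / 2) := by
            rw [Finset.prod_mul_distrib, Finset.prod_const, ← Real.exp_sum,
              Finset.card_univ, Fintype.card_fin]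
        _ = 2 ^ n * Real.exp (t / 2) := by
            congr 1
            have h1 : ∑ i, (lam * x i) ^ 2 / 2 = lam ^ 2 / 2 * s := by
              rw [hs, Finset.mul_sum]
              exact Finset.sum_congr rfl fun i _ => by ring
            rw [h1, hlamdef]
            rw [div_pow, Real.sq_sqrt ht0.le]
            have : σ ^ 2 = s := by rw [sq]; exact hσσ
            rw [this]
            field_simp
    -- sums of exponentials
    have sum1 : ∑ z : Fin n → Bool, Real.exp (lam * S z)
        = ∏ i, (Real.exp (lam * x i) + Real.exp (-(lam * x i))) := by
      have := khintchine_aux2 n (fun i => lam * x i)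
      rw [← this]
      refine Finset.sum_congr rfl fun z _ => ?_
      congr 1
      rw [hS, Finset.mul_sum]
      exact Finset.sum_congr rfl fun i _ => by ring
    have sum2 : ∑ z : Fin n → Bool, Real.exp (-(lam * S z))
        = ∏ i, (Real.exp (lam * x i) + Real.exp (-(lam * x i))) := by
      have := khintchine_aux2 n (fun i => -(lam * x i))
      simp only [neg_neg] at this
      rw [show (∏ i, (Real.exp (lam * x i) + Real.exp (-(lam * x i))))
          = ∏ i, (Real.exp (-(lam * x i)) + Real.exp (lam * x i)) from
          Finset.prod_congr rfl fun i _ => by ring, ← this]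
      refine Finset.sum_congr rfl fun z _ => ?_
      congr 1
      rw [hS, Finset.mul_sum, ← Finset.sum_neg_distrib]
      exact Finset.sum_congr rfl fun i _ => by ring
    -- main sum bound
    have main : ∑ z : Fin n → Bool, |S z| ^ t
        ≤ (t / lam) ^ t * Real.exp (-t) * (2 * (2 ^ n * Real.exp (t / 2))) := by
      calc ∑ z : Fin n → Bool, |S z| ^ t
          ≤ ∑ z : Fin n → Bool, (t / lam) ^ t * Real.exp (-t) *
              (Real.exp (lam * S z) + Real.exp (-(lam * S z))) :=
            Finset.sum_le_sum fun z _ => key z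
        _ = (t / lam) ^ t * Real.exp (-t) *
            ((∑ z : Fin n → Bool, Real.exp (lam * S z)) +
              ∑ z : Fin n → Bool, Real.exp (-(lam * S z))) := by
            rw [← Finset.mul_sum, Finset.sum_add_distrib]
        _ ≤ (t / lam) ^ t * Real.exp (-t) * (2 * (2 ^ n * Real.exp (t / 2))) := by
            have hnn : (0:ℝ) ≤ (t / lam) ^ t * Real.exp (-t) := by positivity
            refine mul_le_mul_of_nonneg_left ?_ hnn
            rw [sum1, sum2]
            linarith [hprod]
    -- identify the constant
    have hconst : (t / lam) ^ t = σ ^ t * t ^ (t / 2) := by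
      have h1 : t / lam = σ * Real.sqrt t := by
        rw [hlamdef, div_div_eq_mul_div, div_eq_iff (by positivity : Real.sqrt t ≠ 0)]
        nlinarith [hst]
      rw [h1, Real.mul_rpow hσ.le (Real.sqrt_nonneg t), Real.sqrt_eq_rpow,
        ← Real.rpow_mul ht0.le]
      congr 2
      ring
    -- finish
    have h2n : (0:ℝ) < 2 ^ n := by positivity
    rw [div_le_iff₀ h2n]
    have hexp : Real.exp (-t) * (2 * Real.exp (t / 2)) ≤ 1 := by
      have h1 : Real.exp (-t) * (2 * Real.exp (t / 2)) = 2 * Real.exp (-(t / 2)) := by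
        rw [mul_left_comm, ← Real.exp_add, show -t + t / 2 = -(t / 2) by ring]
      rw [h1]
      have h2 : Real.exp (-(t / 2)) ≤ Real.exp (-1) :=
        Real.exp_le_exp.2 (by linarith)
      have h3 : (2:ℝ) ≤ Real.exp 1 := by
        have := Real.add_one_le_exp (1:ℝ)
        linarith
      have h4 : Real.exp (-1) ≤ 1 / 2 := by
        rw [Real.exp_neg, inv_eq_one_div, div_le_div_iff₀ (Real.exp_pos 1) two_pos]
        linarith
      linarith
    calc ∑ z : Fin n → Bool, |S z| ^ t
        ≤ (t / lam) ^ t * Real.exp (-t) * (2 * (2 ^ n * Real.exp (t / 2))) := main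
      _ = (t / lam) ^ t * (Real.exp (-t) * (2 * Real.exp (t / 2))) * 2 ^ n := by ring
      _ ≤ (t / lam) ^ t * 1 * 2 ^ n := by
          have : (0:ℝ) ≤ (t / lam) ^ t := by positivity
          have h2 : (t / lam) ^ t * (Real.exp (-t) * (2 * Real.exp (t / 2)))
              ≤ (t / lam) ^ t * 1 := mul_le_mul_of_nonneg_left hexp this
          exact mul_le_mul_of_nonneg_right h2 h2n.le
      _ = σ ^ t * t ^ (t / 2) * 2 ^ n := by rw [mul_one, hconst]
end

section
/- Let x ∈ ℝⁿ, let λ > 0 be such that λ² is a positive multiple of 8, and let z ∈ {-1,1}ⁿ be drawn from a (λ²/4)-wise independent family of uniform random signs. Then Pr[|⟨x,z⟩| > λ‖x‖₂] < 2^{-λ²/4}. -/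
open scoped BigOperators Nat
open MeasureTheory ProbabilityTheory Finset

section Helpers

lemma dfac_lt (m : ℕ) (hm : 0 < m) : (2 * m - 1)‼ < (2 * m) ^ m := by
  induction m with
  | zero => exact absurd hm (lt_irrefl 0)
  | succ m ih =>
    rcases Nat.eq_zero_or_pos m with rfl | hm'
    · decide
    · have h1 : 2 * (m + 1) - 1 = (2 * m - 1) + 2 := by omega
      rw [h1, Nat.doubleFactorial_add_two]
      have ihm := ih hm'
      calc (2 * m - 1 + 2) * (2 * m - 1)‼ < (2 * m + 2) * (2 * m) ^ m := by
            apply Nat.mul_lt_mul_of_lt_of_le (by omega) (le_of_lt ihm)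
            positivity
        _ ≤ (2 * m + 2) * (2 * m + 2) ^ m :=
            Nat.mul_le_mul_left _ (Nat.pow_le_pow_left (by omega) m)
        _ = (2 * (m + 1)) ^ (m + 1) := by ring_nf

lemma multinomial_two_mul_le {n : ℕ} (b : Fin n → ℕ) (M : ℕ) (hM : ∑ i, b i = M)
    (hMpos : 0 < M) :
    Nat.multinomial univ (fun i => 2 * b i) ≤ (2 * M - 1)‼ * Nat.multinomial univ b := by
  have hA := Nat.multinomial_spec univ (fun i => 2 * b i)
  have hB := Nat.multinomial_spec univ b
  have hsum2 : ∑ i, 2 * b i = 2 * M := by rw [← hM, Finset.mul_sum]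
  rw [hsum2] at hA
  rw [hM] at hB
  have hfact : (2 * M)! = 2 ^ M * M ! * (2 * M - 1)‼ := by
    have h1 : 2 * M - 1 + 1 = 2 * M := by omega
    have := Nat.factorial_eq_mul_doubleFactorial (2 * M - 1)
    rw [h1] at this
    rw [this, Nat.doubleFactorial_two_mul]
  have hle : 2 ^ M * ∏ i, (b i)! ≤ ∏ i, (2 * b i)! := by
    have h2 : (2:ℕ) ^ M = ∏ i, 2 ^ b i := by
      rw [Finset.prod_pow_eq_pow_sum, hM]
    rw [h2, ← Finset.prod_mul_distrib]
    apply Finset.prod_le_prod'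
    intro i _
    calc 2 ^ b i * (b i)! = (2 * b i)‼ := (Nat.doubleFactorial_two_mul _).symm
      _ ≤ (2 * b i)! := Nat.doubleFactorial_le_factorial _
  have hpos : 0 < 2 ^ M * ∏ i, (b i)! := by positivity
  apply Nat.le_of_mul_le_mul_right _ hpos
  calc Nat.multinomial univ (fun i => 2 * b i) * (2 ^ M * ∏ i, (b i)!)
      ≤ Nat.multinomial univ (fun i => 2 * b i) * ∏ i, (2 * b i)! :=
        Nat.mul_le_mul_left _ hle
    _ = (2 * M)! := by rw [mul_comm]; exact hA
    _ = 2 ^ M * M ! * (2 * M - 1)‼ := hfact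
    _ = (2 * M - 1)‼ * Nat.multinomial univ b * (2 ^ M * ∏ i, (b i)!) := by
        rw [← hB]; ring

variable {Ω : Type} [MeasureSpace Ω] [IsProbabilityMeasure (ℙ : Measure Ω)]

lemma integrable_of_bound {f : Ω → ℝ} (hm : Measurable f) (C : ℝ)
    (hb : ∀ ω, |f ω| ≤ C) : Integrable f ℙ :=
  ⟨hm.aestronglyMeasurable, HasFiniteIntegral.of_bounded (ae_of_all _ hb)⟩

lemma integral_prod_of_indep {ι : Type*} (f : ι → Ω → ℝ)
    (hind : iIndepFun f ℙ)
    (hmeas : ∀ i, Measurable (f i)) (hb : ∀ i ω, |f i ω| ≤ 1) (s : Finset ι) :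
    ∫ ω, ∏ i ∈ s, f i ω = ∏ i ∈ s, ∫ ω, f i ω := by
  classical
  have hprodb : ∀ (t : Finset ι) ω, |∏ j ∈ t, f j ω| ≤ 1 := by
    intro t ω
    rw [Finset.abs_prod]
    exact Finset.prod_le_one (fun i _ => abs_nonneg _) (fun i _ => hb i ω)
  have hint : ∀ t : Finset ι, Integrable (∏ j ∈ t, f j) ℙ := by
    intro t
    have hm : Measurable (∏ j ∈ t, f j) := by
      have := Finset.measurable_prod t (fun i (_ : i ∈ t) => hmeas i)
      convert this using 1
      ext ω; simp [Finset.prod_apply]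
    exact integrable_of_bound hm 1 (fun ω => by
      simpa [Finset.prod_apply] using hprodb t ω)
  induction s using Finset.cons_induction with
  | empty => simp
  | cons a s ha ih =>
    have hip : IndepFun (∏ j ∈ s, f j) (f a) ℙ :=
      hind.indepFun_finsetProd_of_notMem hmeas ha
    have key := hip.integral_mul_eq_mul_integral (hint s).aestronglyMeasurable
      (integrable_of_bound (hmeas a) 1 (hb a)).aestronglyMeasurable
    simp only [Finset.prod_cons]
    rw [← ih]
    have : ∫ ω, f a ω * ∏ i ∈ s, f i ω = ∫ ω, ((∏ j ∈ s, f j) * f a) ω := by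
      congr 1; ext ω; simp [Finset.prod_apply, mul_comm]
    rw [this]
    rw [show (∫ ω, ((∏ j ∈ s, f j) * f a) ω) = ∫ ω, (∏ j ∈ s, f j) ω * f a ω from rfl] at *
    calc ∫ ω, (∏ j ∈ s, f j) ω * f a ω
        = (∫ ω, (∏ j ∈ s, f j) ω) * ∫ ω, f a ω := key
      _ = (∫ ω, f a ω) * ∫ ω, ∏ i ∈ s, f i ω := by
          rw [mul_comm]; congr 1; apply integral_congr_ae; filter_upwards with ω
          simp [Finset.prod_apply]

lemma integral_sign_eq_zero {g : Ω → ℝ} (hm : Measurable g)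
    (hs : ∀ ω, g ω = 1 ∨ g ω = -1) (hu : ℙ {ω | g ω = 1} = 1 / 2) :
    ∫ ω, g ω = 0 := by
  set A : Set Ω := {ω | g ω = 1} with hA_def
  have hA : MeasurableSet A := hm (measurableSet_singleton 1)
  have hint : Integrable g ℙ := ⟨hm.aestronglyMeasurable,
    HasFiniteIntegral.of_bounded (C := 1) (ae_of_all _ fun ω => by
      rcases hs ω with h | h <;> simp [h])⟩
  have hcompl : ℙ Aᶜ = 1 / 2 := by
    rw [measure_compl hA (measure_ne_top _ _), measure_univ, hu]
    rw [one_div]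
    exact ENNReal.one_sub_inv_two
  have h1 : ∫ ω in A, g ω = (ℙ A).toReal := by
    rw [setIntegral_congr_fun hA (g := fun _ => (1:ℝ)) (fun ω hω => hω)]
    simp
    rfl
  have h2 : ∫ ω in Aᶜ, g ω = -(ℙ Aᶜ).toReal := by
    rw [setIntegral_congr_fun hA.compl (g := fun _ => (-1:ℝ)) (fun ω hω => by
      rcases hs ω with h | h
      · exact absurd h hω
      · exact h)]
    simp
    rfl
  have := integral_add_compl hA hint
  rw [h1, h2, hu, hcompl] at this
  rw [← this]
  norm_num

lemma integral_sign_pow {g : Ω → ℝ} (hm : Measurable g)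
    (hs : ∀ ω, g ω = 1 ∨ g ω = -1) (hu : ℙ {ω | g ω = 1} = 1 / 2) (c : ℕ) :
    ∫ ω, g ω ^ c = if Even c then 1 else 0 := by
  by_cases hc : Even c
  · have : ∀ ω, g ω ^ c = 1 := fun ω => by
      rcases hs ω with h | h
      · simp [h]
      · rw [h, hc.neg_one_pow]
    simp only [this, hc, if_true]
    simp
  · have : ∀ ω, g ω ^ c = g ω := fun ω => by
      rcases hs ω with h | h
      · simp [h]
      · rw [h, (Nat.not_even_iff_odd.mp hc).neg_one_pow]
    simp only [this, hc, if_false]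
    exact integral_sign_eq_zero hm hs hu

lemma integral_prod_z_pow {n k : ℕ}
    (z : Fin n → Ω → ℝ) (hmeas : ∀ i, Measurable (z i))
    (hsign : ∀ i, ∀ ω, z i ω = 1 ∨ z i ω = -1)
    (hunif : ∀ i, ℙ {ω | z i ω = 1} = 1 / 2)
    (hindep : ∀ S : Finset (Fin n), S.card ≤ k →
      iIndepFun
        (fun i : S => z i) ℙ)
    (a : Fin n → ℕ) (ha : ∑ i, a i ≤ k) :
    ∫ ω, ∏ i, (z i ω) ^ (a i) = if ∀ i, Even (a i) then 1 else 0 := by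
  classical
  set T : Finset (Fin n) := univ.filter (fun i => a i ≠ 0) with hT
  have hmemT : ∀ i, i ∈ T ↔ a i ≠ 0 := fun i => by simp [hT]
  have hcard : T.card ≤ k := by
    calc T.card = ∑ _i ∈ T, 1 := by simp
      _ ≤ ∑ i ∈ T, a i := Finset.sum_le_sum (fun i hi => by
          have := (hmemT i).mp hi; omega)
      _ ≤ ∑ i, a i := Finset.sum_le_sum_of_subset (Finset.subset_univ T)
      _ ≤ k := ha
  have hind : iIndepFun
      (fun i : T => fun ω => (z i ω) ^ (a i.1)) ℙ := by
    exact (hindep T hcard).comp (fun i => fun r : ℝ => r ^ (a i.1))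
      (fun i => measurable_id.pow_const _)
  have key := integral_prod_of_indep (fun (i : T) => fun ω => (z i.1 ω) ^ (a i.1)) hind
    (fun i => (hmeas i.1).pow_const _)
    (fun i ω => by rcases hsign i.1 ω with h | h <;> simp [h, abs_pow]) Finset.univ
  have hres : ∀ ω, ∏ i, (z i ω) ^ (a i) = ∏ i ∈ T, (z i ω) ^ (a i) := by
    intro ω
    refine (Finset.prod_subset (Finset.subset_univ T) ?_).symm
    intro i _ hi
    have : a i = 0 := by by_contra h; exact hi ((hmemT i).mpr h)
    simp [this]
  have hcoe : ∀ ω, ∏ i ∈ T, (z i ω) ^ (a i) = ∏ i : T, (z i.1 ω) ^ (a i.1) :=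
    fun ω => (Finset.prod_coe_sort T (fun i => (z i ω) ^ (a i))).symm
  have hstep : ∫ ω, ∏ i, (z i ω) ^ (a i)
      = ∏ i ∈ T, (if Even (a i) then (1:ℝ) else 0) := by
    simp_rw [hres, hcoe]
    rw [key]
    rw [← Finset.prod_coe_sort T (fun i => if Even (a i) then (1:ℝ) else 0)]
    exact Finset.prod_congr rfl (fun i _ =>
      integral_sign_pow (hmeas i.1) (hsign i.1) (hunif i.1) (a i.1))
  rw [hstep]
  by_cases h : ∀ i, Even (a i)
  · rw [if_pos h]
    exact Finset.prod_eq_one (fun i _ => if_pos (h i))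
  · push_neg at h
    obtain ⟨i, hi⟩ := h
    have hiT : i ∈ T := (hmemT i).mpr (by rintro h0; exact hi (by simp [h0]))
    rw [if_neg (by push_neg; exact ⟨i, hi⟩)]
    exact Finset.prod_eq_zero hiT (by simp [hi])

end Helpers

/-- Tail bound from bounded-independence Khintchine: if `λ > 0` with `λ²` a positive
multiple of `8`, and `z₁,…,zₙ` are uniform `±1` random variables that are
`(λ²/4)`-wise independent, then `Pr[|⟨x,z⟩| > λ‖x‖₂] < 2^{-λ²/4}`. -/
theorem khintchine_tail {Ω : Type} [MeasureSpace Ω] [IsProbabilityMeasure (ℙ : Measure Ω)]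
    (n : ℕ) (x : Fin n → ℝ) (lam : ℝ) (hlam : 0 < lam)
    (hmult : ∃ m : ℕ, 0 < m ∧ lam ^ 2 = 8 * m)
    (k : ℕ) (hk : (k : ℝ) = lam ^ 2 / 4)
    (z : Fin n → Ω → ℝ) (hmeas : ∀ i, Measurable (z i))
    (hsign : ∀ i, ∀ ω, z i ω = 1 ∨ z i ω = -1)
    (hunif : ∀ i, ℙ {ω | z i ω = 1} = 1 / 2)
    (hindep : ∀ S : Finset (Fin n), S.card ≤ k →
      iIndepFun
        (fun i : S => z i) ℙ) :
    (ℙ {ω | lam * Real.sqrt (∑ i, (x i) ^ 2) < |∑ i, x i * z i ω|}).toReal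
      < 2 ^ (-(lam ^ 2) / 4) := by
  classical
  obtain ⟨m, hm, hlm⟩ := hmult
  have hk2 : k = 2 * m := by
    have h : (k : ℝ) = ((2 * m : ℕ) : ℝ) := by rw [hk, hlm]; push_cast; ring
    exact_mod_cast h
  have hrpow : (2:ℝ) ^ (-(lam ^ 2) / 4) = ((4:ℝ) ^ m)⁻¹ := by
    have hexp : -(lam ^ 2) / 4 = -((2 * m : ℕ) : ℝ) := by rw [hlm]; push_cast; ring
    rw [hexp, Real.rpow_neg (by norm_num), Real.rpow_natCast]
    congr 1
    rw [pow_mul]; norm_num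
  set σ2 : ℝ := ∑ i, (x i) ^ 2 with hσ2
  by_cases hσ : σ2 = 0
  · have hx0 : ∀ i, x i = 0 := by
      intro i
      have h := (Finset.sum_eq_zero_iff_of_nonneg (fun i _ => sq_nonneg (x i))).mp hσ i
        (Finset.mem_univ i)
      exact (pow_eq_zero_iff (by norm_num)).mp h
    have hset : {ω | lam * Real.sqrt σ2 < |∑ i, x i * z i ω|} = ∅ := by
      ext ω
      simp [hx0, hσ, Real.sqrt_zero]
    rw [hset]
    simp only [measure_empty, ENNReal.toReal_zero]
    positivity
  · have hσpos : 0 < σ2 := lt_of_le_of_ne (Finset.sum_nonneg fun i _ => sq_nonneg _) (Ne.symm hσ)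
    set S : Ω → ℝ := fun ω => ∑ i, x i * z i ω with hS_def
    have hSmeas : Measurable S :=
      Finset.measurable_sum _ (fun i _ => (hmeas i).const_mul (x i))
    have hSbound : ∀ ω, |S ω| ≤ ∑ i, |x i| := by
      intro ω
      calc |S ω| ≤ ∑ i, |x i * z i ω| := Finset.abs_sum_le_sum_abs _ _
        _ = ∑ i, |x i| := Finset.sum_congr rfl (fun i _ => by
            rcases hsign i ω with h | h <;> simp [abs_mul, h])
    -- moment bound
    have hmoment : ∫ ω, S ω ^ (2 * m) ≤ ((2 * m - 1)‼ : ℝ) * σ2 ^ m := by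
      have hexp : ∀ ω, S ω ^ (2 * m) = ∑ a ∈ piAntidiag (univ : Finset (Fin n)) (2 * m),
          (Nat.multinomial univ a : ℝ) * ∏ i, (x i * z i ω) ^ a i := fun ω =>
        Finset.sum_pow_eq_sum_piAntidiag univ (fun i => x i * z i ω) (2 * m)
      have hterm_int : ∀ a ∈ piAntidiag (univ : Finset (Fin n)) (2 * m),
          Integrable (fun ω => (Nat.multinomial univ a : ℝ) * ∏ i, (x i * z i ω) ^ a i) ℙ := by
        intro a _
        refine integrable_of_bound ?_ ((Nat.multinomial univ a : ℝ) * ∏ i, |x i| ^ a i) ?_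
        · exact measurable_const.mul
            (Finset.measurable_prod _ (fun i _ => (((hmeas i).const_mul (x i)).pow_const _)))
        · intro ω
          rw [abs_mul, Nat.abs_cast, Finset.abs_prod]
          refine mul_le_mul_of_nonneg_left ?_ (Nat.cast_nonneg _)
          exact Finset.prod_le_prod (fun i _ => abs_nonneg _) (fun i _ => by
              rw [abs_pow]
              refine pow_le_pow_left₀ (abs_nonneg _) ?_ _
              rcases hsign i ω with h | h <;> simp [abs_mul, h])
      have hint1 : ∫ ω, S ω ^ (2 * m)
          = ∑ a ∈ piAntidiag (univ : Finset (Fin n)) (2 * m),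
            ∫ ω, (Nat.multinomial univ a : ℝ) * ∏ i, (x i * z i ω) ^ a i := by
        simp_rw [hexp]
        exact integral_finset_sum _ hterm_int
      have hint2 : ∀ a ∈ piAntidiag (univ : Finset (Fin n)) (2 * m),
          ∫ ω, (Nat.multinomial univ a : ℝ) * ∏ i, (x i * z i ω) ^ a i
            = ((Nat.multinomial univ a : ℝ) * ∏ i, x i ^ a i)
              * (if ∀ i, Even (a i) then 1 else 0) := by
        intro a hamem
        have hsum_a : ∑ i, a i = 2 * m := ((Finset.mem_piAntidiag).mp hamem).1
        have hptwise : ∀ ω, (Nat.multinomial univ a : ℝ) * ∏ i, (x i * z i ω) ^ a i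
            = ((Nat.multinomial univ a : ℝ) * ∏ i, x i ^ a i) * ∏ i, (z i ω) ^ a i := by
          intro ω
          simp_rw [mul_pow, Finset.prod_mul_distrib]
          ring
        simp_rw [hptwise]
        rw [integral_const_mul]
        congr 1
        exact integral_prod_z_pow z hmeas hsign hunif hindep a (by omega)
      rw [hint1, Finset.sum_congr rfl hint2]
      -- restrict to even multi-indices
      rw [Finset.sum_congr rfl (fun a _ => mul_ite (∀ i, Even (a i))
        ((Nat.multinomial univ a : ℝ) * ∏ i, x i ^ a i) 1 0)]
      simp_rw [mul_one, mul_zero]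
      rw [← Finset.sum_filter]
      -- reindex by halving
      have hreindex :
          ∑ a ∈ (piAntidiag (univ : Finset (Fin n)) (2 * m)).filter (fun a => ∀ i, Even (a i)),
            (Nat.multinomial univ a : ℝ) * ∏ i, x i ^ a i
          = ∑ b ∈ piAntidiag (univ : Finset (Fin n)) m,
            (Nat.multinomial univ (fun i => 2 * b i) : ℝ) * ∏ i, x i ^ (2 * b i) := by
        apply Finset.sum_nbij' (i := fun a => fun i => a i / 2) (j := fun b => fun i => 2 * b i)
        · intro a ha
          simp only [Finset.mem_filter, Finset.mem_piAntidiag] at ha ⊢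
          obtain ⟨⟨hsum, -⟩, heven⟩ := ha
          constructor
          · have : ∀ i, 2 * (a i / 2) = a i := fun i => by
              obtain ⟨c, hc⟩ := heven i; omega
            have h2 : 2 * ∑ i, a i / 2 = 2 * m := by
              rw [Finset.mul_sum]
              rw [Finset.sum_congr rfl (fun i _ => this i)]
              exact hsum
            omega
          · intro i _; exact Finset.mem_univ i
        · intro b hb
          simp only [Finset.mem_filter, Finset.mem_piAntidiag] at hb ⊢
          obtain ⟨hsum, -⟩ := hb
          refine ⟨⟨?_, fun i _ => Finset.mem_univ i⟩, fun i => ⟨b i, by ring⟩⟩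
          rw [← Finset.mul_sum, hsum]
        · intro a ha
          simp only [Finset.mem_filter] at ha
          funext i
          obtain ⟨c, hc⟩ := ha.2 i
          show 2 * (a i / 2) = a i
          omega
        · intro b _
          funext i
          show 2 * b i / 2 = b i
          omega
        · intro a ha
          simp only [Finset.mem_filter] at ha
          have h3 : ∀ j, 2 * (a j / 2) = a j := fun j => by
            obtain ⟨c, hc⟩ := ha.2 j; omega
          simp only [h3]
      rw [hreindex]
      have hterm : ∀ b ∈ piAntidiag (univ : Finset (Fin n)) m,
          (Nat.multinomial univ (fun i => 2 * b i) : ℝ) * ∏ i, x i ^ (2 * b i)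
            ≤ ((2 * m - 1)‼ : ℝ) * ((Nat.multinomial univ b : ℝ) * ∏ i, (x i ^ 2) ^ b i) := by
        intro b hb
        have hsum_b : ∑ i, b i = m := ((Finset.mem_piAntidiag).mp hb).1
        have hprod_eq : ∏ i, x i ^ (2 * b i) = ∏ i, (x i ^ 2) ^ b i := by
          exact Finset.prod_congr rfl (fun i _ => by rw [← pow_mul])
        rw [hprod_eq, ← mul_assoc]
        apply mul_le_mul_of_nonneg_right
        · have := multinomial_two_mul_le b m hsum_b hm
          calc (Nat.multinomial univ (fun i => 2 * b i) : ℝ)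
              ≤ (((2 * m - 1)‼ * Nat.multinomial univ b : ℕ) : ℝ) := by exact_mod_cast this
            _ = ((2 * m - 1)‼ : ℝ) * (Nat.multinomial univ b : ℝ) := by push_cast; ring
        · exact Finset.prod_nonneg (fun i _ => pow_nonneg (sq_nonneg _) _)
      calc ∑ b ∈ piAntidiag (univ : Finset (Fin n)) m,
            (Nat.multinomial univ (fun i => 2 * b i) : ℝ) * ∏ i, x i ^ (2 * b i)
          ≤ ∑ b ∈ piAntidiag (univ : Finset (Fin n)) m,
            ((2 * m - 1)‼ : ℝ) * ((Nat.multinomial univ b : ℝ) * ∏ i, (x i ^ 2) ^ b i) :=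
            Finset.sum_le_sum hterm
        _ = ((2 * m - 1)‼ : ℝ) * σ2 ^ m := by
            rw [← Finset.mul_sum]
            congr 1
            rw [hσ2, Finset.sum_pow_eq_sum_piAntidiag univ (fun i => x i ^ 2) m]
    -- Markov
    set a0 : ℝ := lam * Real.sqrt σ2 with ha0_def
    have ha0 : 0 < a0 := mul_pos hlam (Real.sqrt_pos.mpr hσpos)
    have hSnn : ∀ ω, 0 ≤ S ω ^ (2 * m) := fun ω => (even_two_mul m).pow_nonneg _
    have hSint : Integrable (fun ω => S ω ^ (2 * m)) ℙ := by
      apply integrable_of_bound (hSmeas.pow_const _) ((∑ i, |x i|) ^ (2 * m))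
      intro ω
      rw [abs_pow]
      exact pow_le_pow_left₀ (abs_nonneg _) (hSbound ω) _
    have hmarkov := mul_meas_ge_le_integral_of_nonneg (μ := ℙ)
      (ae_of_all _ hSnn) hSint (a0 ^ (2 * m))
    have hsubset : {ω | a0 < |S ω|} ⊆ {ω | a0 ^ (2 * m) ≤ S ω ^ (2 * m)} := by
      intro ω hω
      simp only [Set.mem_setOf_eq] at hω ⊢
      calc a0 ^ (2 * m) ≤ |S ω| ^ (2 * m) := pow_le_pow_left₀ ha0.le hω.le _
        _ = |S ω ^ (2 * m)| := by rw [abs_pow]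
        _ = S ω ^ (2 * m) := abs_of_nonneg (hSnn ω)
    have hmono : (ℙ {ω | a0 < |S ω|}).toReal
        ≤ (ℙ {ω | a0 ^ (2 * m) ≤ S ω ^ (2 * m)}).toReal :=
      ENNReal.toReal_mono (measure_ne_top _ _) (measure_mono hsubset)
    have hεpos : 0 < a0 ^ (2 * m) := pow_pos ha0 _
    have hεval : a0 ^ (2 * m) = (8 * m : ℝ) ^ m * σ2 ^ m := by
      rw [ha0_def, mul_pow, pow_mul, pow_mul, Real.sq_sqrt hσpos.le, ← hlm]
    have hfinal : (ℙ {ω | a0 < |S ω|}).toReal ≤ ((2 * m - 1)‼ : ℝ) / (8 * m : ℝ) ^ m := by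
      have h1 : (ℙ {ω | a0 ^ (2 * m) ≤ S ω ^ (2 * m)}).toReal
          ≤ (∫ ω, S ω ^ (2 * m)) / a0 ^ (2 * m) :=
        (le_div_iff₀ hεpos).mpr (by rw [measureReal_def] at hmarkov; linarith [hmarkov])
      calc (ℙ {ω | a0 < |S ω|}).toReal ≤ (∫ ω, S ω ^ (2 * m)) / a0 ^ (2 * m) :=
            le_trans hmono h1
        _ ≤ (((2 * m - 1)‼ : ℝ) * σ2 ^ m) / a0 ^ (2 * m) := by
            exact div_le_div_of_nonneg_right hmoment hεpos.le
        _ = ((2 * m - 1)‼ : ℝ) / (8 * m : ℝ) ^ m := by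
            rw [hεval]
            rw [div_eq_div_iff (by positivity) (by positivity)]
            ring
    refine lt_of_le_of_lt hfinal ?_
    rw [hrpow]
    have hdlt : ((2 * m - 1)‼ : ℝ) < ((2 * m : ℕ) : ℝ) ^ m := by
      exact_mod_cast dfac_lt m hm
    have h8 : (8 * m : ℝ) ^ m = 4 ^ m * ((2 * m : ℕ) : ℝ) ^ m := by
      rw [← mul_pow]; congr 1; push_cast; ring
    rw [div_lt_iff₀ (by positivity), h8]
    calc ((2 * m - 1)‼ : ℝ) < ((2 * m : ℕ) : ℝ) ^ m := hdlt
      _ = ((4:ℝ) ^ m)⁻¹ * (4 ^ m * ((2 * m : ℕ) : ℝ) ^ m) := by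
          rw [← mul_assoc, inv_mul_cancel₀ (by positivity), one_mul]
end

section
/- Let 0 < p < 2 and let z ∈ ℂ satisfy |z| ≤ 1/2. Then for any positive integer d, |(1+z)^p − ∑_{k=0}^{d} C(p,k) z^k| ≤ |C(p,d+1)| · 2 · (1/2)^{d+1}, where (1+z)^p = exp(p·log(1+z)) with the principal logarithm and C(p,k) is the generalized binomial coefficient. In particular, since |C(p,d+1)| < 1 for 0 < p < 2, the truncation error is at most 2^{-d}. -/
open scoped BigOperators

/-- The generalized binomial coefficient `C(p,k) = (∏_{j=0}^{k-1}(p−j))/k!`. -/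
noncomputable def genBinom (p : ℝ) (k : ℕ) : ℝ :=
  (∏ j ∈ Finset.range k, (p - j)) / (Nat.factorial k)

lemma genBinom_zero (p : ℝ) : genBinom p 0 = 1 := by simp [genBinom]

lemma genBinom_rec (p : ℝ) (k : ℕ) :
    ((k : ℝ) + 1) * genBinom p (k + 1) = (p - k) * genBinom p k := by
  have hk : (Nat.factorial k : ℝ) ≠ 0 := Nat.cast_ne_zero.2 (Nat.factorial_ne_zero k)
  have hk1 : ((k : ℝ) + 1) ≠ 0 := by positivity
  simp only [genBinom, Finset.prod_range_succ, Nat.factorial_succ, Nat.cast_mul,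
    Nat.cast_add, Nat.cast_one]
  field_simp

lemma genBinom_abs_succ_le (p : ℝ) (hp : 0 < p) (hp2 : p < 2) {k : ℕ} (hk : 1 ≤ k) :
    |genBinom p (k + 1)| ≤ |genBinom p k| := by
  have hk1 : (0:ℝ) < (k : ℝ) + 1 := by positivity
  have h : genBinom p (k + 1) = (p - k) / ((k:ℝ)+1) * genBinom p k := by
    have := genBinom_rec p k
    field_simp
    linarith [genBinom_rec p k]
  rw [h, abs_mul, abs_div]
  have h2 : |p - (k:ℝ)| ≤ (k:ℝ) + 1 := by
    have : (1:ℝ) ≤ (k:ℝ) := by exact_mod_cast hk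
    rw [abs_le]; constructor <;> nlinarith
  have : |p - (k:ℝ)| / |(k:ℝ)+1| ≤ 1 := by
    rw [abs_of_pos hk1, div_le_one hk1]; exact h2
  nlinarith [abs_nonneg (genBinom p k), abs_nonneg (p - (k:ℝ)), this]

lemma genBinom_abs_mono (p : ℝ) (hp : 0 < p) (hp2 : p < 2) {m k : ℕ} (hm : 1 ≤ m) (hmk : m ≤ k) :
    |genBinom p k| ≤ |genBinom p m| := by
  induction k with
  | zero => omega
  | succ n ih =>
    rcases Nat.lt_or_ge m (n+1) with h | h
    · have hn : m ≤ n := by omega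
      exact le_trans (genBinom_abs_succ_le p hp hp2 (le_trans hm hn)) (ih hn)
    · have : m = n + 1 := by omega
      simp [this]

lemma genBinom_abs_le_two (p : ℝ) (hp : 0 < p) (hp2 : p < 2) (k : ℕ) :
    |genBinom p k| ≤ 2 := by
  rcases Nat.eq_zero_or_pos k with h | h
  · simp [h, genBinom_zero]
  · have h1 : |genBinom p 1| ≤ 2 := by
      have : genBinom p 1 = p := by simp [genBinom]
      rw [this, abs_of_pos hp]; linarith
    exact le_trans (genBinom_abs_mono p hp hp2 le_rfl h) h1

section
variable (p : ℝ)

-- complex coefficient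
noncomputable def cC (n : ℕ) : ℂ := ((genBinom p n : ℝ) : ℂ)

lemma cC_norm (n : ℕ) : ‖cC p n‖ = |genBinom p n| := by
  simp [cC, Complex.norm_real]

lemma cC_rec (n : ℕ) : ((n : ℂ) + 1) * cC p (n + 1) = ((p : ℂ) - n) * cC p n := by
  have := genBinom_rec p n
  simp only [cC]
  push_cast
  exact_mod_cast congrArg (Complex.ofReal) this

variable {p}

lemma summable_main (hp : 0 < p) (hp2 : p < 2) {w : ℂ} (hw : ‖w‖ ≤ 7/10) :
    Summable (fun n => cC p n * w ^ n) := by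
  refine Summable.of_norm_bounded (g := fun n => 2 * (7/10 : ℝ) ^ n)
    ((summable_geometric_of_lt_one (by norm_num) (by norm_num)).mul_left 2) (fun n => ?_)
  rw [norm_mul, cC_norm, norm_pow]
  have h1 := genBinom_abs_le_two p hp hp2 n
  have h2 : ‖w‖ ^ n ≤ (7/10 : ℝ) ^ n := by gcongr
  nlinarith [abs_nonneg (genBinom p n), pow_nonneg (norm_nonneg w) n,
    pow_nonneg (by norm_num : (0:ℝ) ≤ 7/10) n]

lemma summable_deriv (hp : 0 < p) (hp2 : p < 2) {w : ℂ} (hw : ‖w‖ ≤ 7/10) :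
    Summable (fun n => cC p n * ((n : ℂ) * w ^ (n - 1))) := by
  refine Summable.of_norm_bounded (g := fun n => 4 * ((n : ℝ) * (7/10 : ℝ) ^ n))
    (((summable_pow_mul_geometric_of_norm_lt_one 1 (by norm_num [Real.norm_eq_abs] :
      ‖(7/10 : ℝ)‖ < 1)).congr (by intro n; simp)).mul_left 4) (fun n => ?_)
  · 
    rw [norm_mul, norm_mul, cC_norm, norm_pow, RCLike.norm_natCast]
    cases n with
    | zero => simp
    | succ m =>
      rw [Nat.add_sub_cancel]
      have h1 : |genBinom p (m+1)| ≤ 2 := genBinom_abs_le_two p hp hp2 _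
      have h2 : ‖w‖ ^ m ≤ (7/10 : ℝ) ^ m := by gcongr
      have h3 : (0:ℝ) ≤ ((m:ℝ)+1) := by positivity
      have h4 : (0:ℝ) ≤ ‖w‖ ^ m := by positivity
      have h5 : (0:ℝ) ≤ (7/10:ℝ)^m := by positivity
      have key : |genBinom p (m+1)| * (((m:ℝ)+1) * ‖w‖ ^ m)
          ≤ 2 * (((m:ℝ)+1) * (7/10:ℝ)^m) := by
        have := mul_le_mul h1 (by gcongr :
          ((m:ℝ)+1) * ‖w‖ ^ m ≤ ((m:ℝ)+1) * (7/10:ℝ)^m) (by positivity) (by norm_num)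
        simpa using this
      calc |genBinom p (m+1)| * (↑(m+1) * ‖w‖ ^ m)
          ≤ 2 * (((m:ℝ)+1) * (7/10:ℝ)^m) := by push_cast; exact key
        _ ≤ 4 * ((↑(m+1) : ℝ) * (7/10:ℝ)^(m+1)) := by
            push_cast
            rw [pow_succ]
            nlinarith [h5, h3]

lemma summable_nmul (hp : 0 < p) (hp2 : p < 2) {w : ℂ} (hw : ‖w‖ ≤ 7/10) :
    Summable (fun n => cC p n * ((n : ℂ) * w ^ n)) := by
  refine Summable.of_norm_bounded (g := fun n => 2 * ((n : ℝ) * (7/10 : ℝ) ^ n))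
    (((summable_pow_mul_geometric_of_norm_lt_one 1 (by norm_num [Real.norm_eq_abs] :
      ‖(7/10 : ℝ)‖ < 1)).congr (by intro n; simp)).mul_left 2) (fun n => ?_)
  · 
    rw [norm_mul, norm_mul, cC_norm, norm_pow, RCLike.norm_natCast]
    have h1 := genBinom_abs_le_two p hp hp2 n
    have h2 : (n:ℝ) * ‖w‖ ^ n ≤ (n:ℝ) * (7/10 : ℝ) ^ n := by gcongr
    have := mul_le_mul h1 h2 (by positivity) (by norm_num)
    simpa using this
end

section
variable {p : ℝ}

lemma deriv_bound2 (hp : 0 < p) (hp2 : p < 2) {w : ℂ} (hw : ‖w‖ ≤ 7/10) (n : ℕ) :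
    ‖cC p n * ((n : ℂ) * w ^ (n - 1))‖ ≤ 4 * ((n : ℝ) * (7/10 : ℝ) ^ n) := by
  rw [norm_mul, norm_mul, cC_norm, norm_pow, RCLike.norm_natCast]
  cases n with
  | zero => simp
  | succ m =>
    rw [Nat.add_sub_cancel]
    have h1 : |genBinom p (m+1)| ≤ 2 := genBinom_abs_le_two p hp hp2 _
    have h2 : ‖w‖ ^ m ≤ (7/10 : ℝ) ^ m := by gcongr
    have h3 : (0:ℝ) ≤ ((m:ℝ)+1) := by positivity
    have h5 : (0:ℝ) ≤ (7/10:ℝ)^m := by positivity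
    have key : |genBinom p (m+1)| * (((m:ℝ)+1) * ‖w‖ ^ m)
        ≤ 2 * (((m:ℝ)+1) * (7/10:ℝ)^m) := by
      have := mul_le_mul h1 (by gcongr :
        ((m:ℝ)+1) * ‖w‖ ^ m ≤ ((m:ℝ)+1) * (7/10:ℝ)^m) (by positivity) (by norm_num)
      simpa using this
    calc |genBinom p (m+1)| * (↑(m+1) * ‖w‖ ^ m)
        ≤ 2 * (((m:ℝ)+1) * (7/10:ℝ)^m) := by push_cast; exact key
      _ ≤ 4 * ((↑(m+1) : ℝ) * (7/10:ℝ)^(m+1)) := by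
          push_cast
          rw [pow_succ]
          nlinarith [h5, h3]

lemma summable_u : Summable (fun n : ℕ => 4 * ((n : ℝ) * (7/10 : ℝ) ^ n)) :=
  ((summable_pow_mul_geometric_of_norm_lt_one 1 (by norm_num [Real.norm_eq_abs] :
    ‖(7/10 : ℝ)‖ < 1)).congr (by intro n; simp)).mul_left 4

lemma hasDerivAt_F (hp : 0 < p) (hp2 : p < 2) {w : ℂ} (hw : w ∈ Metric.ball (0:ℂ) (7/10)) :
    HasDerivAt (fun z : ℂ => ∑' n, cC p n * z ^ n)
      (∑' n, cC p n * ((n : ℂ) * w ^ (n - 1))) w := by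
  refine hasDerivAt_tsum_of_isPreconnected summable_u Metric.isOpen_ball
    ((convex_ball (0:ℂ) (7/10)).isPreconnected)
    (fun n y _ => (hasDerivAt_pow n y).const_mul (cC p n))
    (fun n y hy => deriv_bound2 hp hp2 (le_of_lt (by simpa using hy)) n)
    (Metric.mem_ball_self (by norm_num)) ?_ hw
  exact summable_main hp hp2 (by norm_num)

lemma ode_identity (hp : 0 < p) (hp2 : p < 2) {w : ℂ} (hw : ‖w‖ ≤ 7/10) :
    (1 + w) * (∑' n, cC p n * ((n : ℂ) * w ^ (n - 1)))
      = (p : ℂ) * ∑' n, cC p n * w ^ n := by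
  have hD := summable_deriv hp hp2 hw
  have hN := summable_nmul hp hp2 hw
  have hshift : Summable (fun n => cC p (n+1) * (((n:ℂ)+1) * w ^ n)) := by
    refine ((summable_nat_add_iff 1).2 hD).congr (fun n => ?_)
    push_cast [Nat.add_sub_cancel]
    ring
  have e1 : (∑' n, cC p n * ((n:ℂ) * w ^ (n-1)))
      = ∑' n, cC p (n+1) * (((n:ℂ)+1) * w ^ n) := by
    rw [Summable.tsum_eq_zero_add hD]
    simp only [Nat.cast_zero, zero_mul, mul_zero, zero_add]
    exact tsum_congr fun n => by push_cast [Nat.add_sub_cancel]; ring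
  have e2 : w * (∑' n, cC p n * ((n:ℂ) * w ^ (n-1)))
      = ∑' n, cC p n * ((n:ℂ) * w ^ n) := by
    rw [← tsum_mul_left]
    refine tsum_congr fun n => ?_
    cases n with
    | zero => simp
    | succ m => rw [Nat.add_sub_cancel]; ring
  calc (1 + w) * (∑' n, cC p n * ((n:ℂ) * w ^ (n-1)))
      = (∑' n, cC p n * ((n:ℂ) * w ^ (n-1))) + w * (∑' n, cC p n * ((n:ℂ) * w ^ (n-1))) := by
        ring
    _ = (∑' n, cC p (n+1) * (((n:ℂ)+1) * w ^ n)) + ∑' n, cC p n * ((n:ℂ) * w ^ n) := by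
        rw [e2, e1]
    _ = ∑' n, (cC p (n+1) * (((n:ℂ)+1) * w ^ n) + cC p n * ((n:ℂ) * w ^ n)) := by
        rw [Summable.tsum_add hshift hN]
    _ = ∑' n, (p : ℂ) * (cC p n * w ^ n) := by
        refine tsum_congr fun n => ?_
        linear_combination w ^ n * cC_rec p n
    _ = (p : ℂ) * ∑' n, cC p n * w ^ n := tsum_mul_left
end

lemma exp_eq_tsum {p : ℝ} (hp : 0 < p) (hp2 : p < 2) {w : ℂ} (hw : ‖w‖ ≤ 1/2) :
    Complex.exp ((p:ℂ) * Complex.log (1 + w)) = ∑' n, cC p n * w ^ n := by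
  have hG : ∀ y ∈ Metric.ball (0:ℂ) (7/10),
      HasDerivAt (fun z : ℂ =>
        (∑' n, cC p n * z ^ n) * Complex.exp (-(p:ℂ) * Complex.log (1+z))) 0 y := by
    intro y hy
    have hyn : ‖y‖ < 7/10 := by simpa using hy
    have hre : |y.re| ≤ ‖y‖ := Complex.abs_re_le_norm y
    have hslit : (1 : ℂ) + y ∈ Complex.slitPlane := by
      rw [Complex.mem_slitPlane_iff]
      left
      have : (0:ℝ) < 1 + y.re := by
        have : -‖y‖ ≤ y.re := neg_le_of_abs_le hre
        linarith
      simpa [Complex.add_re] using this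
    have hne : (1:ℂ) + y ≠ 0 := Complex.slitPlane_ne_zero hslit
    have hlog : HasDerivAt (fun z : ℂ => Complex.log (1+z)) ((1+y)⁻¹) y :=
      (Complex.hasDerivAt_log hslit).comp_const_add 1 y
    have hE : HasDerivAt (fun z : ℂ => Complex.exp (-(p:ℂ) * Complex.log (1+z)))
        (Complex.exp (-(p:ℂ) * Complex.log (1+y)) * (-(p:ℂ) * (1+y)⁻¹)) y :=
      (hlog.const_mul (-(p:ℂ))).cexp
    have hF := hasDerivAt_F hp hp2 hy
    have hmul := hF.mul hE
    refine hmul.congr_deriv ?_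
    have key := ode_identity hp hp2 hyn.le
    set D := ∑' n, cC p n * ((n:ℂ) * y ^ (n - 1)) with hD
    set F := ∑' n, cC p n * y ^ n with hFd
    set E := Complex.exp (-(p:ℂ) * Complex.log (1+y)) with hEd
    have hinv : (1+y)*(1+y)⁻¹ = 1 := mul_inv_cancel₀ hne
    linear_combination (E*(1+y)⁻¹) * key - D*E*hinv
  have hmem : w ∈ Metric.ball (0:ℂ) (7/10) := by
    rw [mem_ball_zero_iff]; exact lt_of_le_of_lt hw (by norm_num)
  have h0 : (0:ℂ) ∈ Metric.ball (0:ℂ) (7/10) := Metric.mem_ball_self (by norm_num)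
  have hcon := (convex_ball (0:ℂ) (7/10)).norm_image_sub_le_of_norm_hasDerivWithin_le
    (f' := fun _ => 0) (C := 0) (fun y hy => (hG y hy).hasDerivWithinAt)
    (fun y _ => by simp) h0 hmem
  rw [zero_mul] at hcon
  have hGw : (∑' n, cC p n * w ^ n) * Complex.exp (-(p:ℂ) * Complex.log (1+w))
      = (∑' n, cC p n * (0:ℂ) ^ n) * Complex.exp (-(p:ℂ) * Complex.log (1+0)) := by
    have := norm_sub_eq_zero_iff.1 (le_antisymm hcon (norm_nonneg _))
    exact this
  have hF0 : (∑' n, cC p n * (0:ℂ) ^ n) = 1 := by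
    rw [tsum_eq_single 0 (fun n hn => by simp [zero_pow hn])]
    simp [cC, genBinom]
  rw [hF0, one_mul] at hGw
  simp only [add_zero, Complex.log_one, mul_zero, Complex.exp_zero] at hGw
  have := congrArg (· * Complex.exp ((p:ℂ) * Complex.log (1+w))) hGw
  simp only [one_mul, mul_assoc, ← Complex.exp_add] at this
  rw [eq_comm]
  simpa using this

/-- Taylor truncation error for `(1+z)^p` with `0 < p < 2` and `|z| ≤ 1/2`: the error
after the degree-`d` partial sum is at most `|C(p,d+1)|·2·(1/2)^{d+1}`, and in
particular at most `2^{-d}`. -/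
theorem binomial_truncation (p : ℝ) (hp : 0 < p) (hp2 : p < 2) (z : ℂ)
    (hz : ‖z‖ ≤ 1 / 2) (d : ℕ) (hd : 1 ≤ d) :
    ‖Complex.exp ((p : ℂ) * Complex.log (1 + z))
        - ∑ k ∈ Finset.range (d + 1), (genBinom p k : ℂ) * z ^ k‖
      ≤ |genBinom p (d + 1)| * 2 * (1 / 2) ^ (d + 1) ∧
    ‖Complex.exp ((p : ℂ) * Complex.log (1 + z))
        - ∑ k ∈ Finset.range (d + 1), (genBinom p k : ℂ) * z ^ k‖
      ≤ (1 / 2) ^ d := by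
  have hz' : ‖z‖ ≤ 1/2 := hz
  have hid := exp_eq_tsum hp hp2 hz'
  have hM : Summable (fun n => cC p n * z ^ n) := summable_main hp hp2 (le_trans hz' (by norm_num))
  have htail := Summable.sum_add_tsum_nat_add (d+1) hM
  set A := |genBinom p (d+1)| with hA
  have hA0 : 0 ≤ A := abs_nonneg _
  have key : Complex.exp ((p : ℂ) * Complex.log (1 + z))
      - ∑ k ∈ Finset.range (d + 1), (genBinom p k : ℂ) * z ^ k
      = ∑' i, cC p (i + (d+1)) * z ^ (i + (d+1)) := by
    rw [hid, ← htail]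
    simp [cC]
  have habs : ∀ i, ‖cC p (i+(d+1)) * z ^ (i+(d+1))‖ ≤ A * (1/2:ℝ)^(i+(d+1)) := by
    intro i
    rw [norm_mul, cC_norm, norm_pow]
    have h1 : |genBinom p (i+(d+1))| ≤ A :=
      genBinom_abs_mono p hp hp2 (by omega) (by omega)
    have h2 : ‖z‖ ^ (i+(d+1)) ≤ (1/2:ℝ)^(i+(d+1)) := by gcongr
    exact mul_le_mul h1 h2 (by positivity) hA0
  have hgeo : HasSum (fun i : ℕ => A * (1/2:ℝ)^(i+(d+1)))
      (A * (1/2:ℝ)^(d+1) * 2) := by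
    have heq : (fun i : ℕ => A * (1/2:ℝ)^(i+(d+1)))
        = fun i : ℕ => (A * (1/2:ℝ)^(d+1)) * (1/2:ℝ)^i := by
      funext i; rw [pow_add]; ring
    rw [heq]
    have h := (hasSum_geometric_of_lt_one (by norm_num : (0:ℝ) ≤ 1/2)
      (by norm_num : (1/2:ℝ) < 1)).mul_left (A * (1/2:ℝ)^(d+1))
    rw [show (A * (1/2:ℝ)^(d+1) * 2) = A * (1/2:ℝ)^(d+1) * (1 - 1/2)⁻¹ by norm_num]
    exact h
  have bound1 : ‖Complex.exp ((p : ℂ) * Complex.log (1 + z))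
      - ∑ k ∈ Finset.range (d + 1), (genBinom p k : ℂ) * z ^ k‖
      ≤ A * 2 * (1 / 2) ^ (d + 1) := by
    rw [key]
    calc ‖∑' i, cC p (i + (d+1)) * z ^ (i + (d+1))‖
        ≤ A * (1/2:ℝ)^(d+1) * 2 := tsum_of_norm_bounded hgeo habs
      _ = A * 2 * (1/2:ℝ)^(d+1) := by ring
  refine ⟨bound1, le_trans bound1 ?_⟩
  have hA1 : A ≤ 1 := by
    have hm : |genBinom p (d+1)| ≤ |genBinom p 2| :=
      genBinom_abs_mono p hp hp2 (by norm_num) (by omega)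
    have h2 : genBinom p 2 = p * (p - 1) / 2 := by
      show (∏ j ∈ Finset.range 2, (p - (j:ℕ))) / ((Nat.factorial 2 : ℕ) : ℝ) = _
      rw [Finset.prod_range_succ, Finset.prod_range_one]
      norm_num
    have h3 : |genBinom p 2| ≤ 1 := by
      rw [h2, abs_div, abs_two, div_le_one (by norm_num : (0:ℝ) < 2), abs_le]
      constructor <;> nlinarith
    exact le_trans hm h3
  have hpow : (0:ℝ) ≤ (1/2:ℝ)^d := by positivity
  rw [pow_succ]
  nlinarith [hpow, hA1, hA0]
end
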